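/- The generating function R₁(x) = ∑_{m,n ≥ 0} r₁(m,n) x^m q^n for 2-colored Rogers-Ramanujan partitions counted by number of parts m and size n satisfies the functional equation R₁(x) - R₂(x) = x q R₁(x q) + x q R₂(x q), where R₂ is the analogous generating function restricted to partitions with smallest part at least 2. -/

import Mathlib

/-- A valid single-color part set of a 2-colored Rogers-Ramanujan partition:
all parts positive and any two distinct parts differ by at least 2. -/
def IsRRColor (A : Finset ℕ) : Prop :=
  (∀ a ∈ A, 1 ≤ a) ∧ ∀ a ∈ A, ∀ b ∈ A, a ≠ b → 2 ≤ max a b - min a b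

/-- A 2-colored Rogers-Ramanujan partition: a pair of part sets (black, red),
each a valid color class, with no common part. -/
def TwoColoredRR (p : Finset ℕ × Finset ℕ) : Prop :=
  IsRRColor p.1 ∧ IsRRColor p.2 ∧ Disjoint p.1 p.2

/-- `r j m n`: the number of 2-colored Rogers-Ramanujan partitions of `n` with
`m` parts in total, all parts at least `j`. -/
noncomputable def rRR (j m n : ℕ) : ℕ :=
  Nat.card {p : Finset ℕ × Finset ℕ // TwoColoredRR p ∧ (∀ a ∈ p.1 ∪ p.2, j ≤ a) ∧
    p.1.card + p.2.card = m ∧ p.1.sum id + p.2.sum id = n}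


section Aux
open scoped Classical
open Finset

/-- pairs of RR color classes with first-color parts ≥ a, second-color parts ≥ b,
`m` parts in total and total sum `n`. -/
noncomputable def TCset (a b m n : ℕ) : Finset (Finset ℕ × Finset ℕ) :=
  ((Finset.range (n+1)).powerset ×ˢ (Finset.range (n+1)).powerset).filter
    (fun p => TwoColoredRR p ∧ (∀ x ∈ p.1, a ≤ x) ∧ (∀ x ∈ p.2, b ≤ x) ∧
      p.1.card + p.2.card = m ∧ p.1.sum id + p.2.sum id = n)

lemma mem_TCset {a b m n : ℕ} {p : Finset ℕ × Finset ℕ} :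
    p ∈ TCset a b m n ↔ TwoColoredRR p ∧ (∀ x ∈ p.1, a ≤ x) ∧ (∀ x ∈ p.2, b ≤ x) ∧
      p.1.card + p.2.card = m ∧ p.1.sum id + p.2.sum id = n := by
  constructor
  · exact fun h => (Finset.mem_filter.mp h).2
  · intro h
    refine Finset.mem_filter.mpr ⟨?_, h⟩
    obtain ⟨ht, _, _, _, hsum⟩ := h
    have h1 : ∀ x ∈ p.1, x ≤ n := fun x hx => le_trans
      (Finset.single_le_sum (f := id) (fun _ _ => Nat.zero_le _) hx)
      (le_trans (Nat.le_add_right _ _) hsum.le)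
    have h2 : ∀ x ∈ p.2, x ≤ n := fun x hx => le_trans
      (Finset.single_le_sum (f := id) (fun _ _ => Nat.zero_le _) hx)
      (le_trans (Nat.le_add_left _ _) hsum.le)
    refine Finset.mem_product.mpr ⟨Finset.mem_powerset.mpr ?_, Finset.mem_powerset.mpr ?_⟩ <;>
      intro x hx <;> rw [Finset.mem_range, Nat.lt_succ_iff]
    exacts [h1 x hx, h2 x hx]

lemma rRR_eq (j m n : ℕ) : rRR j m n = (TCset j j m n).card := by
  rw [rRR, ← Nat.card_eq_finsetCard]
  apply Nat.card_congr
  apply Equiv.subtypeEquivRight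
  intro p
  rw [mem_TCset]
  simp only [Finset.forall_mem_union]
  tauto

lemma gap_iff (x y : ℕ) : 2 ≤ max x y - min x y ↔ (x + 2 ≤ y ∨ y + 2 ≤ x) := by omega

/-- splitting the first color on whether it contains `1`. -/
lemma TCset_two_left (b m n : ℕ) :
    TCset 2 b m n = (TCset 1 b m n).filter (fun p : Finset ℕ × Finset ℕ => 1 ∉ p.1) := by
  ext p
  simp only [Finset.mem_filter, mem_TCset]
  constructor
  · rintro ⟨ht, hA, hB, hrest⟩
    refine ⟨⟨ht, fun x hx => le_trans one_le_two (hA x hx), hB, hrest⟩, fun h1 => by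
      have := hA 1 h1; omega⟩
  · rintro ⟨⟨ht, hA, hB, hrest⟩, h1⟩
    refine ⟨ht, fun x hx => ?_, hB, hrest⟩
    have := ht.1.1 x hx
    have : x ≠ 1 := fun h => h1 (h ▸ hx)
    omega

lemma TCset_two_right (a m n : ℕ) :
    TCset a 2 m n = (TCset a 1 m n).filter (fun p : Finset ℕ × Finset ℕ => 1 ∉ p.2) := by
  ext p
  simp only [Finset.mem_filter, mem_TCset]
  constructor
  · rintro ⟨ht, hA, hB, hrest⟩
    refine ⟨⟨ht, hA, fun x hx => le_trans one_le_two (hB x hx), hrest⟩, fun h1 => by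
      have := hB 1 h1; omega⟩
  · rintro ⟨⟨ht, hA, hB, hrest⟩, h1⟩
    refine ⟨ht, hA, fun x hx => ?_, hrest⟩
    have := ht.2.1.1 x hx
    have : x ≠ 1 := fun h => h1 (h ▸ hx)
    omega

lemma split_left (b m n : ℕ) :
    (TCset 1 b m n).card =
      ((TCset 1 b m n).filter (fun p : Finset ℕ × Finset ℕ => 1 ∈ p.1)).card + (TCset 2 b m n).card := by
  rw [TCset_two_left]
  exact (Finset.card_filter_add_card_filter_not (fun p : Finset ℕ × Finset ℕ => 1 ∈ p.1)).symm

lemma split_right (a m n : ℕ) :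
    (TCset a 1 m n).card =
      ((TCset a 1 m n).filter (fun p : Finset ℕ × Finset ℕ => 1 ∈ p.2)).card + (TCset a 2 m n).card := by
  rw [TCset_two_right]
  exact (Finset.card_filter_add_card_filter_not (fun p : Finset ℕ × Finset ℕ => 1 ∈ p.2)).symm

/-- If `1` is a black part, red parts are automatically ≥ 2. -/
lemma repl_left (m n : ℕ) :
    (TCset 1 2 m n).filter (fun p : Finset ℕ × Finset ℕ => 1 ∈ p.1) =
      (TCset 1 1 m n).filter (fun p : Finset ℕ × Finset ℕ => 1 ∈ p.1) := by
  ext p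
  simp only [Finset.mem_filter, mem_TCset]
  constructor
  · rintro ⟨⟨ht, hA, hB, hrest⟩, h1⟩
    exact ⟨⟨ht, hA, fun x hx => le_trans one_le_two (hB x hx), hrest⟩, h1⟩
  · rintro ⟨⟨ht, hA, hB, hrest⟩, h1⟩
    refine ⟨⟨ht, hA, fun x hx => ?_, hrest⟩, h1⟩
    have := ht.2.1.1 x hx
    have : x ≠ 1 := fun h => Finset.disjoint_left.mp ht.2.2 h1 (h ▸ hx)
    omega

lemma repl_right (m n : ℕ) :
    (TCset 2 1 m n).filter (fun p : Finset ℕ × Finset ℕ => 1 ∈ p.2) =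
      (TCset 1 1 m n).filter (fun p : Finset ℕ × Finset ℕ => 1 ∈ p.2) := by
  ext p
  simp only [Finset.mem_filter, mem_TCset]
  constructor
  · rintro ⟨⟨ht, hA, hB, hrest⟩, h1⟩
    exact ⟨⟨ht, fun x hx => le_trans one_le_two (hA x hx), hB, hrest⟩, h1⟩
  · rintro ⟨⟨ht, hA, hB, hrest⟩, h1⟩
    refine ⟨⟨ht, fun x hx => ?_, hB, hrest⟩, h1⟩
    have := ht.1.1 x hx
    have : x ≠ 1 := fun h => Finset.disjoint_right.mp ht.2.2 h1 (h ▸ hx)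
    omega

lemma swap_mem {a b m n : ℕ} {p : Finset ℕ × Finset ℕ} (h : p ∈ TCset a b m n) :
    p.swap ∈ TCset b a m n := by
  rw [mem_TCset] at h ⊢
  simp only [Prod.fst_swap, Prod.snd_swap]
  obtain ⟨⟨h1, h2, h3⟩, hA, hB, hc, hs⟩ := h
  exact ⟨⟨h2, h1, h3.symm⟩, hB, hA, by omega, by omega⟩

lemma TCset_swap (a b m n : ℕ) : (TCset a b m n).card = (TCset b a m n).card := by
  apply Finset.card_nbij' Prod.swap Prod.swap
    (fun p hp => swap_mem hp) (fun p hp => swap_mem hp) <;> exact fun p _ => Prod.swap_swap p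

lemma TCset_empty (a b m n : ℕ) (h : n < m) : TCset a b m n = ∅ := by
  rw [Finset.eq_empty_iff_forall_notMem]
  intro p hp
  rw [mem_TCset] at hp
  obtain ⟨⟨h1, h2, _⟩, _, _, hc, hs⟩ := hp
  have c1 : p.1.card ≤ p.1.sum id := by
    simpa using Finset.card_nsmul_le_sum p.1 id 1 h1.1
  have c2 : p.2.card ≤ p.2.sum id := by
    simpa using Finset.card_nsmul_le_sum p.2 id 1 h2.1
  omega

lemma image_sub_card (s : Finset ℕ) (hs : ∀ x ∈ s, 1 ≤ x) :
    (s.image (· - 1)).card = s.card :=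
  Finset.card_image_of_injOn (by
    intro a ha b hb h
    have := hs a ha; have := hs b hb
    simp only at h; omega)

lemma image_sub_sum (s : Finset ℕ) (hs : ∀ x ∈ s, 1 ≤ x) :
    (s.image (· - 1)).sum id + s.card = s.sum id := by
  rw [Finset.sum_image (by
    intro a ha b hb h
    have := hs a ha; have := hs b hb
    simp only at h; omega)]
  have h1 : s.sum id = ∑ x ∈ s, ((x - 1) + 1) :=
    Finset.sum_congr rfl (fun x hx => by have := hs x hx; simp only [id]; omega)
  rw [h1, Finset.sum_add_distrib, Finset.sum_const, smul_eq_mul, mul_one]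
  simp only [id_eq]

lemma image_add_card (s : Finset ℕ) : (s.image (· + 1)).card = s.card :=
  Finset.card_image_of_injective s (fun a b h => by omega)

lemma image_add_sum (s : Finset ℕ) : (s.image (· + 1)).sum id = s.sum id + s.card := by
  rw [Finset.sum_image (fun a _ b _ h => by omega)]
  simp only [id_eq]
  rw [Finset.sum_add_distrib, Finset.sum_const, smul_eq_mul, mul_one]

/-- The key bijection: partitions with `m` parts, sum `n`, and `1` a black part
correspond to partitions with `m-1` parts, sum `n-m`, black parts ≥ 2, red parts ≥ 1
(delete the part 1 and decrease every part by 1). -/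
lemma bijA (m n : ℕ) (hm : 1 ≤ m) (hmn : m ≤ n) :
    ((TCset 1 1 m n).filter (fun p : Finset ℕ × Finset ℕ => 1 ∈ p.1)).card =
      (TCset 2 1 (m-1) (n-m)).card := by
  apply Finset.card_nbij'
    (i := fun p => ((p.1.erase 1).image (· - 1), p.2.image (· - 1)))
    (j := fun q => (insert 1 (q.1.image (· + 1)), q.2.image (· + 1)))
  · -- forward map lands in target
    intro p hp
    rw [Finset.mem_coe, Finset.mem_filter, mem_TCset] at hp
    obtain ⟨⟨⟨⟨hA1, hA2⟩, ⟨hB1, hB2⟩, hdisj⟩, _, _, hc, hs⟩, h1A⟩ := hp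
    -- facts
    have hA3 : ∀ x ∈ p.1.erase 1, 3 ≤ x := by
      intro x hx
      obtain ⟨hne, hxA⟩ := Finset.mem_erase.mp hx
      have := hA2 x hxA 1 h1A hne
      have := hA1 x hxA
      omega
    have hB2' : ∀ x ∈ p.2, 2 ≤ x := by
      intro x hx
      have := hB1 x hx
      have : x ≠ 1 := fun h => Finset.disjoint_right.mp hdisj hx (h ▸ h1A)
      omega
    rw [Finset.mem_coe, mem_TCset]
    refine ⟨⟨⟨?_, ?_⟩, ⟨?_, ?_⟩, ?_⟩, ?_, ?_, ?_, ?_⟩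
    · intro y hy
      obtain ⟨x, hx, rfl⟩ := Finset.mem_image.mp hy
      have := hA3 x hx; omega
    · intro y hy z hz hne
      obtain ⟨x1, hx1, rfl⟩ := Finset.mem_image.mp hy
      obtain ⟨x2, hx2, rfl⟩ := Finset.mem_image.mp hz
      have hx1' := hA3 x1 hx1
      have hx2' := hA3 x2 hx2
      have hxne : x1 ≠ x2 := by omega
      have := hA2 x1 (Finset.mem_of_mem_erase hx1) x2 (Finset.mem_of_mem_erase hx2) hxne
      omega
    · intro y hy
      obtain ⟨x, hx, rfl⟩ := Finset.mem_image.mp hy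
      have := hB2' x hx; omega
    · intro y hy z hz hne
      obtain ⟨x1, hx1, rfl⟩ := Finset.mem_image.mp hy
      obtain ⟨x2, hx2, rfl⟩ := Finset.mem_image.mp hz
      have hx1' := hB2' x1 hx1
      have hx2' := hB2' x2 hx2
      have hxne : x1 ≠ x2 := by omega
      have := hB2 x1 hx1 x2 hx2 hxne
      omega
    · rw [Finset.disjoint_left]
      intro y hy hy2
      obtain ⟨x1, hx1, h1⟩ := Finset.mem_image.mp hy
      obtain ⟨x2, hx2, h2⟩ := Finset.mem_image.mp hy2
      have := hA3 x1 hx1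
      have := hB2' x2 hx2
      have hx12 : x1 = x2 := by omega
      exact Finset.disjoint_left.mp hdisj (Finset.mem_of_mem_erase hx1) (hx12 ▸ hx2)
    · intro y hy
      obtain ⟨x, hx, rfl⟩ := Finset.mem_image.mp hy
      have := hA3 x hx; omega
    · intro y hy
      obtain ⟨x, hx, rfl⟩ := Finset.mem_image.mp hy
      have := hB2' x hx; omega
    · -- cards
      have e1 := image_sub_card (p.1.erase 1) (fun x hx => by have := hA3 x hx; omega)
      have e2 := image_sub_card p.2 (fun x hx => by have := hB2' x hx; omega)
      have e3 : (p.1.erase 1).card = p.1.card - 1 := Finset.card_erase_of_mem h1A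
      have e4 : 1 ≤ p.1.card := Finset.card_pos.mpr ⟨1, h1A⟩
      simp only
      omega
    · -- sums
      have e1 := image_sub_sum (p.1.erase 1) (fun x hx => by have := hA3 x hx; omega)
      have e2 := image_sub_sum p.2 (fun x hx => by have := hB2' x hx; omega)
      have e3 : (p.1.erase 1).sum id + 1 = p.1.sum id := by
        simpa using Finset.sum_erase_add p.1 id h1A
      have e4 : (p.1.erase 1).card = p.1.card - 1 := Finset.card_erase_of_mem h1A
      have e5 : 1 ≤ p.1.card := Finset.card_pos.mpr ⟨1, h1A⟩
      have e6 := image_sub_card p.2 (fun x hx => by have := hB2' x hx; omega)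
      simp only
      omega
  · -- backward map lands in source
    intro q hq
    rw [Finset.mem_coe, mem_TCset] at hq
    obtain ⟨⟨⟨hA1, hA2⟩, ⟨hB1, hB2⟩, hdisj⟩, hAm, hBm, hc, hs⟩ := hq
    have h1ni : (1 : ℕ) ∉ q.1.image (· + 1) := by
      intro h
      obtain ⟨x, hx, hx1⟩ := Finset.mem_image.mp h
      have := hAm x hx; omega
    rw [Finset.mem_coe, Finset.mem_filter, mem_TCset]
    refine ⟨⟨⟨⟨?_, ?_⟩, ⟨?_, ?_⟩, ?_⟩, ?_, ?_, ?_, ?_⟩, Finset.mem_insert_self 1 _⟩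
    · intro y hy
      rcases Finset.mem_insert.mp hy with rfl | hy'
      · exact le_refl 1
      · obtain ⟨x, hx, rfl⟩ := Finset.mem_image.mp hy'
        omega
    · intro y hy z hz hne
      rcases Finset.mem_insert.mp hy with rfl | hy'
      · obtain ⟨x, hx, rfl⟩ := Finset.mem_image.mp
          ((Finset.mem_insert.mp hz).resolve_left (Ne.symm hne))
        have := hAm x hx; omega
      · obtain ⟨x1, hx1, rfl⟩ := Finset.mem_image.mp hy'
        have h1 := hAm x1 hx1
        rcases Finset.mem_insert.mp hz with rfl | hz'
        · omega
        · obtain ⟨x2, hx2, rfl⟩ := Finset.mem_image.mp hz'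
          have h2 := hAm x2 hx2
          have hxne : x1 ≠ x2 := by omega
          have := hA2 x1 hx1 x2 hx2 hxne
          omega
    · intro y hy
      obtain ⟨x, hx, rfl⟩ := Finset.mem_image.mp hy
      omega
    · intro y hy z hz hne
      obtain ⟨x1, hx1, rfl⟩ := Finset.mem_image.mp hy
      obtain ⟨x2, hx2, rfl⟩ := Finset.mem_image.mp hz
      have hxne : x1 ≠ x2 := by omega
      have := hB2 x1 hx1 x2 hx2 hxne
      omega
    · rw [Finset.disjoint_left]
      intro y hy hy2
      obtain ⟨x2, hx2, h2⟩ := Finset.mem_image.mp hy2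
      have hx2b := hB1 x2 hx2
      rcases Finset.mem_insert.mp hy with rfl | hy'
      · omega
      · obtain ⟨x1, hx1, h1⟩ := Finset.mem_image.mp hy'
        have hx12 : x1 = x2 := by omega
        exact Finset.disjoint_left.mp hdisj hx1 (hx12 ▸ hx2)
    · intro y hy
      rcases Finset.mem_insert.mp hy with rfl | hy'
      · exact le_refl 1
      · obtain ⟨x, hx, rfl⟩ := Finset.mem_image.mp hy'
        omega
    · intro y hy
      obtain ⟨x, hx, rfl⟩ := Finset.mem_image.mp hy
      omega
    · have e1 : (insert 1 (q.1.image (· + 1))).card = (q.1.image (· + 1)).card + 1 :=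
        Finset.card_insert_of_notMem h1ni
      have e2 := image_add_card q.1
      have e3 := image_add_card q.2
      simp only
      omega
    · have e1 : (insert 1 (q.1.image (· + 1))).sum id = 1 + (q.1.image (· + 1)).sum id := by
        simpa using Finset.sum_insert h1ni
      have e2 := image_add_sum q.1
      have e3 := image_add_sum q.2
      have e4 := image_add_card q.1
      simp only
      omega
  · -- left inverse
    intro p hp
    rw [Finset.mem_coe, Finset.mem_filter, mem_TCset] at hp
    obtain ⟨⟨⟨⟨hA1, _⟩, ⟨hB1, _⟩, _⟩, _, _, _, _⟩, h1A⟩ := hp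
    have h1 : ((p.1.erase 1).image (· - 1)).image (· + 1) = p.1.erase 1 := by
      rw [Finset.image_image]
      have : p.1.erase 1 = (p.1.erase 1).image id := Finset.image_id.symm
      nth_rewrite 2 [this]
      apply Finset.image_congr
      intro x hx
      have := hA1 x (Finset.mem_of_mem_erase hx)
      simp only [Function.comp_apply, id]
      omega
    have h2 : (p.2.image (· - 1)).image (· + 1) = p.2 := by
      rw [Finset.image_image]
      have : p.2 = p.2.image id := Finset.image_id.symm
      nth_rewrite 2 [this]
      apply Finset.image_congr
      intro x hx
      have := hB1 x hx
      simp only [Function.comp_apply, id]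
      omega
    simp only [h1, h2, Finset.insert_erase h1A]
  · -- right inverse
    intro q hq
    rw [Finset.mem_coe, mem_TCset] at hq
    obtain ⟨_, hAm, _, _, _⟩ := hq
    have h1ni : (1 : ℕ) ∉ q.1.image (· + 1) := by
      intro h
      obtain ⟨x, hx, hx1⟩ := Finset.mem_image.mp h
      have := hAm x hx; omega
    have h1 : ((insert 1 (q.1.image (· + 1))).erase 1).image (· - 1) = q.1 := by
      rw [Finset.erase_insert h1ni, Finset.image_image]
      have : q.1 = q.1.image id := Finset.image_id.symm
      nth_rewrite 2 [this]
      apply Finset.image_congr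
      intro x hx
      simp only [Function.comp_apply, id]
      omega
    have h2 : (q.2.image (· + 1)).image (· - 1) = q.2 := by
      rw [Finset.image_image]
      have : q.2 = q.2.image id := Finset.image_id.symm
      nth_rewrite 2 [this]
      apply Finset.image_congr
      intro x hx
      simp only [Function.comp_apply, id]
      omega
    simp only [h1, h2]

lemma filter_swap_card (m n : ℕ) :
    ((TCset 1 1 m n).filter (fun p : Finset ℕ × Finset ℕ => 1 ∈ p.2)).card =
      ((TCset 1 1 m n).filter (fun p : Finset ℕ × Finset ℕ => 1 ∈ p.1)).card := by
  apply Finset.card_nbij' Prod.swap Prod.swap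
  · intro p hp
    rw [Finset.mem_coe, Finset.mem_filter] at hp ⊢
    exact ⟨swap_mem hp.1, hp.2⟩
  · intro p hp
    rw [Finset.mem_coe, Finset.mem_filter] at hp ⊢
    exact ⟨swap_mem hp.1, hp.2⟩
  · exact fun p _ => Prod.swap_swap p
  · exact fun p _ => Prod.swap_swap p

lemma bijB (m n : ℕ) (hm : 1 ≤ m) (hmn : m ≤ n) :
    ((TCset 1 1 m n).filter (fun p : Finset ℕ × Finset ℕ => 1 ∈ p.2)).card =
      (TCset 1 2 (m-1) (n-m)).card := by
  rw [filter_swap_card, bijA m n hm hmn, TCset_swap]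

lemma filter_one_empty_of_zero (n : ℕ) :
    ((TCset 1 1 0 n).filter (fun p : Finset ℕ × Finset ℕ => 1 ∈ p.1)) = ∅ ∧
    ((TCset 1 1 0 n).filter (fun p : Finset ℕ × Finset ℕ => 1 ∈ p.2)) = ∅ := by
  constructor <;>
  · rw [Finset.filter_eq_empty_iff]
    intro p hp
    rw [mem_TCset] at hp
    obtain ⟨_, _, _, hc, _⟩ := hp
    have h1 : p.1 = ∅ := Finset.card_eq_zero.mp (by omega)
    have h2 : p.2 = ∅ := Finset.card_eq_zero.mp (by omega)
    simp [h1, h2]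

/-- The key recursion: `r₁(m,n) = r₂(m,n) + r₁(m-1,n-m) + r₂(m-1,n-m)`. -/
lemma key (m n : ℕ) : (TCset 1 1 m n).card = (TCset 2 2 m n).card +
    (if 1 ≤ m ∧ m ≤ n then
      (TCset 1 1 (m-1) (n-m)).card + (TCset 2 2 (m-1) (n-m)).card else 0) := by
  have E1 : (TCset 1 1 m n).card =
      ((TCset 1 1 m n).filter (fun p : Finset ℕ × Finset ℕ => 1 ∈ p.1)).card +
      ((TCset 1 1 m n).filter (fun p : Finset ℕ × Finset ℕ => 1 ∈ p.2)).card +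
      (TCset 2 2 m n).card := by
    have h1 := split_left 1 m n
    have h2 := split_right 2 m n
    have h3 := repl_right m n
    rw [h3] at h2
    omega
  split_ifs with h
  · obtain ⟨hm, hmn⟩ := h
    rw [E1, bijA m n hm hmn, bijB m n hm hmn]
    -- E3 at (m-1, n-m)
    have h1 := split_left 1 (m-1) (n-m)
    have h2 := split_left 2 (m-1) (n-m)
    have h3 := repl_left (m-1) (n-m)
    rw [h3] at h2
    omega
  · rcases Nat.lt_or_ge n m with hlt | hge
    · rw [TCset_empty 1 1 m n hlt, TCset_empty 2 2 m n hlt]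
      simp
    · have hm0 : m = 0 := by omega
      subst hm0
      obtain ⟨f1, f2⟩ := filter_one_empty_of_zero n
      rw [E1, f1, f2]
      simp

end Aux

/-- The two-variable generating function `R_j(x) = ∑ r_j(m,n) xᵐ qⁿ`, as a formal
power series in the variables `x` (index 0) and `q` (index 1). -/
noncomputable def Rgen (j : ℕ) : MvPowerSeries (Fin 2) ℤ :=
  fun e => (rRR j (e 0) (e 1) : ℤ)

/-- The series `R_j(xq)`, i.e. the result of substituting `x ↦ xq` in `R_j(x)`:
its coefficient of `xᵐ qⁿ` is `r_j(m, n-m)` (and `0` if `n < m`). -/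
noncomputable def RgenShift (j : ℕ) : MvPowerSeries (Fin 2) ℤ :=
  fun e => if e 0 ≤ e 1 then (rRR j (e 0) (e 1 - e 0) : ℤ) else 0

open MvPowerSeries in
theorem functional_equation :
    Rgen 1 - Rgen 2 =
      X (0 : Fin 2) * X 1 * RgenShift 1 + X (0 : Fin 2) * X 1 * RgenShift 2 := by
  apply MvPowerSeries.ext
  intro e
  have hX : (X (0 : Fin 2) : MvPowerSeries (Fin 2) ℤ) * X 1 =
      monomial (Finsupp.single (0 : Fin 2) 1 + Finsupp.single 1 1) 1 := by
    rw [X_def, X_def, monomial_mul_monomial, one_mul]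
  rw [map_sub, map_add, hX, coeff_monomial_mul, coeff_monomial_mul]
  set d : Fin 2 →₀ ℕ := Finsupp.single (0 : Fin 2) 1 + Finsupp.single 1 1 with hd
  have hd0 : d 0 = 1 := by simp [hd]
  have hd1 : d 1 = 1 := by simp [hd]
  have hde : d ≤ e ↔ 1 ≤ e 0 ∧ 1 ≤ e 1 := by
    rw [Finsupp.le_def]
    constructor
    · intro h
      have h0 := h 0
      have h1 := h 1
      rw [hd0] at h0
      rw [hd1] at h1
      exact ⟨h0, h1⟩
    · intro ⟨h0, h1⟩ i
      match i with
      | 0 => omega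
      | 1 => omega
  have hsub0 : (e - d) 0 = e 0 - 1 := by
    rw [Finsupp.tsub_apply, hd0]
  have hsub1 : (e - d) 1 = e 1 - 1 := by
    rw [Finsupp.tsub_apply, hd1]
  have hR1 : (coeff e) (Rgen 1) = (rRR 1 (e 0) (e 1) : ℤ) := rfl
  have hR2 : (coeff e) (Rgen 2) = (rRR 2 (e 0) (e 1) : ℤ) := rfl
  have hS : ∀ j, (coeff (e - d)) (RgenShift j) =
      if e 0 - 1 ≤ e 1 - 1 then (rRR j (e 0 - 1) ((e 1 - 1) - (e 0 - 1)) : ℤ) else 0 := by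
    intro j
    show (if (e - d) 0 ≤ (e - d) 1 then (rRR j ((e - d) 0) ((e - d) 1 - (e - d) 0) : ℤ) else 0)
      = _
    rw [hsub0, hsub1]
  rw [hR1, hR2, hS 1, hS 2]
  have hkey := key (e 0) (e 1)
  rw [rRR_eq 1 (e 0) (e 1), rRR_eq 2 (e 0) (e 1)]
  by_cases h : 1 ≤ e 0 ∧ e 0 ≤ e 1
  · have hd_le : d ≤ e := hde.mpr ⟨h.1, le_trans h.1 h.2⟩
    have hle : e 0 - 1 ≤ e 1 - 1 := by omega
    rw [if_pos hd_le, if_pos hd_le, if_pos hle, if_pos hle, if_pos h] at *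
    have he : (e 1 - 1) - (e 0 - 1) = e 1 - e 0 := by omega
    rw [he, rRR_eq 1 (e 0 - 1) (e 1 - e 0), rRR_eq 2 (e 0 - 1) (e 1 - e 0)]
    rw [hkey]
    push_cast
    ring
  · rw [if_neg h] at hkey
    have hz : (if d ≤ e then
          1 * (if e 0 - 1 ≤ e 1 - 1 then (rRR 1 (e 0 - 1) ((e 1 - 1) - (e 0 - 1)) : ℤ) else 0)
        else 0) +
        (if d ≤ e then
          1 * (if e 0 - 1 ≤ e 1 - 1 then (rRR 2 (e 0 - 1) ((e 1 - 1) - (e 0 - 1)) : ℤ) else 0)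
        else 0) = 0 := by
      by_cases hd_le : d ≤ e
      · have h01 := hde.mp hd_le
        have hle : ¬ (e 0 - 1 ≤ e 1 - 1) := by omega
        rw [if_pos hd_le, if_pos hd_le, if_neg hle, if_neg hle]
        ring
      · rw [if_neg hd_le, if_neg hd_le]
        ring
    rw [hz, hkey]
    push_cast
    ring
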